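/- Let H be a real Hilbert space, let α, μ > 0, and let (W_n) be a sequence of bounded self-adjoint operators with W_n ≽ α·Id and ‖W_n‖ ≤ μ for all n. Suppose there is a summable sequence (η_n) of nonnegative reals with (1+η_n)·W_n ≽ W_{n+1} for all n. Then the sequence (W_n) converges pointwise (strongly) to some bounded self-adjoint operator W with W ≽ α·Id. -/

import Mathlib

open RealInnerProductSpace Finset Filter

lemma aux_cs {H : Type*} [NormedAddCommGroup H] [InnerProductSpace ℝ H]
    (A : H →L[ℝ] H) (hsym : ∀ u v : H, ⟪A u, v⟫ = ⟪u, A v⟫)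
    (hpos : ∀ u : H, 0 ≤ ⟪A u, u⟫) (x : H) :
    ‖A x‖ ^ 2 ≤ ‖A‖ * ⟪A x, x⟫ := by
  have cs : ∀ u v : H, ⟪A u, v⟫ ^ 2 ≤ ⟪A u, u⟫ * ⟪A v, v⟫ := by
    intro u v
    have e2 : ∀ t : ℝ, ⟪A (u + t • v), u + t • v⟫
        = ⟪A u, u⟫ + 2 * t * ⟪A u, v⟫ + t * t * ⟪A v, v⟫ := by
      intro t
      have hvu : ⟪A v, u⟫ = ⟪A u, v⟫ := by rw [hsym v u, real_inner_comm]
      simp only [map_add, map_smul, inner_add_left, inner_add_right,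
        real_inner_smul_left, real_inner_smul_right, hvu]
      ring
    have hd : discrim (⟪A v, v⟫) (2 * ⟪A u, v⟫) (⟪A u, u⟫) ≤ 0 := by
      apply discrim_le_zero
      intro t
      have h := hpos (u + t • v)
      rw [e2 t] at h
      linarith
    rw [discrim] at hd
    nlinarith
  rcases eq_or_ne (A x) 0 with h0 | h0
  · have : ⟪A x, x⟫ = 0 := by rw [h0, inner_zero_left]
    simp [h0, this]
  · have hn : 0 < ‖A x‖ := norm_pos_iff.mpr h0
    have h1 := cs x (A x)
    have h2 : ⟪A (A x), A x⟫ ≤ ‖A‖ * ‖A x‖ * ‖A x‖ := by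
      calc ⟪A (A x), A x⟫ ≤ ‖A (A x)‖ * ‖A x‖ := real_inner_le_norm _ _
        _ ≤ ‖A‖ * ‖A x‖ * ‖A x‖ := by
            have := A.le_opNorm (A x)
            nlinarith [norm_nonneg (A x)]
    have h3 : ⟪A x, A x⟫ = ‖A x‖ ^ 2 := real_inner_self_eq_norm_sq _
    nlinarith [hpos x, mul_le_mul_of_nonneg_left h2 (hpos x), mul_pos hn hn, sq_nonneg (‖A x‖ ^ 2 - ‖A‖ * ⟪A x, x⟫)]

theorem stmt_14 {H : Type*} [NormedAddCommGroup H] [InnerProductSpace ℝ H] [CompleteSpace H]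
    (α μ : ℝ) (hα : 0 < α) (hμ : 0 < μ)
    (W : ℕ → H →L[ℝ] H) (hW : ∀ n, IsSelfAdjoint (W n))
    (hWα : ∀ n, ∀ x : H, α * ‖x‖ ^ 2 ≤ ⟪W n x, x⟫)
    (hWμ : ∀ n, ‖W n‖ ≤ μ)
    (η : ℕ → ℝ) (hη0 : ∀ n, 0 ≤ η n) (hη : Summable η)
    (hmon : ∀ n, ∀ x : H, ⟪W (n + 1) x, x⟫ ≤ (1 + η n) * ⟪W n x, x⟫) :
    ∃ Wlim : H →L[ℝ] H, IsSelfAdjoint Wlim ∧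
      (∀ x : H, α * ‖x‖ ^ 2 ≤ ⟪Wlim x, x⟫) ∧
      ∀ x : H, Filter.Tendsto (fun n => W n x) Filter.atTop (nhds (Wlim x)) := by
  -- symmetry of each W n
  have hsymW : ∀ k, ∀ u v : H, ⟪W k u, v⟫ = ⟪u, W k v⟫ := fun k =>
    (ContinuousLinearMap.isSelfAdjoint_iff_isSymmetric.mp (hW k))
  -- basic quantities
  set S : ℝ := ∑' n, η n with hSdef
  set s : ℕ → ℝ := fun n => ∑ k ∈ range n, η k with hsdef
  have hs0 : ∀ n, 0 ≤ s n := fun n => Finset.sum_nonneg fun k _ => hη0 k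
  have hsS : ∀ n, s n ≤ S := fun n => hη.sum_le_tsum _ (fun i _ => hη0 i)
  have hsmono : Monotone s := by
    intro a b hab
    exact Finset.sum_le_sum_of_subset_of_nonneg (Finset.range_subset_range.mpr hab)
      (fun k _ _ => hη0 k)
  have hstend : Tendsto s atTop (nhds S) := hη.hasSum.tendsto_sum_nat
  set π : ℕ → ℕ → ℝ := fun n m => ∏ k ∈ Ico n m, (1 + η k) with hπdef
  have hπ1 : ∀ n m, 1 ≤ π n m := by
    intro n m
    show (1:ℝ) ≤ ∏ k ∈ Ico n m, (1 + η k)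
    calc (1:ℝ) = ∏ _k ∈ Ico n m, (1:ℝ) := by simp
      _ ≤ ∏ k ∈ Ico n m, (1 + η k) :=
        Finset.prod_le_prod (fun k _ => zero_le_one) (fun k _ => by linarith [hη0 k])
  have hπexp : ∀ n m, n ≤ m → π n m ≤ Real.exp (S - s n) := by
    intro n m hnm
    calc π n m ≤ ∏ k ∈ Ico n m, Real.exp (η k) :=
          Finset.prod_le_prod (fun k _ => by linarith [hη0 k])
            (fun k _ => by linarith [Real.add_one_le_exp (η k)])
      _ = Real.exp (∑ k ∈ Ico n m, η k) := (Real.exp_sum _ _).symm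
      _ = Real.exp (s m - s n) := by rw [Finset.sum_Ico_eq_sub _ hnm]
      _ ≤ Real.exp (S - s n) := Real.exp_le_exp.mpr (by linarith [hsS m])
  set P : ℕ → ℝ := fun n => ∏ k ∈ range n, (1 + η k) with hPdef
  have hP1 : ∀ n, 1 ≤ P n := by
    intro n
    show (1:ℝ) ≤ ∏ k ∈ range n, (1 + η k)
    calc (1:ℝ) = ∏ _k ∈ range n, (1:ℝ) := by simp
      _ ≤ ∏ k ∈ range n, (1 + η k) :=
        Finset.prod_le_prod (fun k _ => zero_le_one) (fun k _ => by linarith [hη0 k])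
  have hPpos : ∀ n, 0 < P n := fun n => lt_of_lt_of_le one_pos (hP1 n)
  have hPπ : ∀ n m, n ≤ m → P n * π n m = P m := fun n m hnm =>
    Finset.prod_range_mul_prod_Ico _ hnm
  have hPle : ∀ n, P n ≤ Real.exp S := by
    intro n
    have h := hπexp 0 n (Nat.zero_le n)
    have h1 : π 0 n = P n := by
      simp only [hπdef, hPdef, Finset.range_eq_Ico]
    have h2 : s 0 = 0 := by simp only [hsdef, Finset.range_zero, Finset.sum_empty]
    rw [h1, h2, sub_zero] at h
    exact h
  -- nonnegativity of quadratic forms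
  have hq0 : ∀ n (x : H), 0 ≤ ⟪W n x, x⟫ := fun n x =>
    le_trans (by positivity) (hWα n x)
  -- telescoped monotonicity
  have htel : ∀ (x : H) n m, n ≤ m → ⟪W m x, x⟫ ≤ π n m * ⟪W n x, x⟫ := by
    intro x n m hnm
    induction m, hnm using Nat.le_induction with
    | base =>
        have : π n n = 1 := by simp [hπdef]
        rw [this, one_mul]
    | succ m hm ih =>
        have hπsucc : π n (m + 1) = π n m * (1 + η m) :=
          Finset.prod_Ico_succ_top hm _
        calc ⟪W (m+1) x, x⟫ ≤ (1 + η m) * ⟪W m x, x⟫ := hmon m x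
          _ ≤ (1 + η m) * (π n m * ⟪W n x, x⟫) :=
              mul_le_mul_of_nonneg_left ih (by linarith [hη0 m])
          _ = π n (m + 1) * ⟪W n x, x⟫ := by rw [hπsucc]; ring
  -- pointwise convergence: fix x, show Cauchy
  have hcauchy : ∀ x : H, CauchySeq fun n => W n x := by
    intro x
    set r : ℕ → ℝ := fun n => ⟪W n x, x⟫ / P n with hrdef
    have hr_anti : Antitone r := by
      apply antitone_nat_of_succ_le
      intro n
      rw [hrdef]
      simp only
      rw [div_le_div_iff₀ (hPpos (n+1)) (hPpos n)]
      have hPs : P (n + 1) = P n * (1 + η n) := Finset.prod_range_succ _ _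
      rw [hPs]
      have := hmon n x
      nlinarith [hq0 n x, hPpos n, hη0 n]
    have hr0 : ∀ n, 0 ≤ r n := fun n => div_nonneg (hq0 n x) (hPpos n).le
    have hbdd : BddBelow (Set.range r) := ⟨0, by rintro _ ⟨n, rfl⟩; exact hr0 n⟩
    set R : ℝ := ⨅ n, r n with hRdef
    have hrtend : Tendsto r atTop (nhds R) := tendsto_atTop_ciInf hr_anti hbdd
    have hRle : ∀ n, R ≤ r n := fun n => ciInf_le hbdd n
    -- the bound sequence
    set c : ℕ → ℝ := fun N => Real.exp S * (r N - R) with hcdef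
    set e : ℕ → ℝ := fun N => Real.exp (S - s N) with hedef
    set MA : ℝ := (Real.exp S + 1) * μ with hMAdef
    have hMA0 : 0 ≤ MA := by positivity
    set b : ℕ → ℝ := fun N => Real.sqrt (MA * c N) + (e N - 1) * (μ * ‖x‖) with hbdef
    have hc_tend : Tendsto c atTop (nhds 0) := by
      have : Tendsto (fun N => r N - R) atTop (nhds (R - R)) :=
        hrtend.sub tendsto_const_nhds
      rw [sub_self] at this
      simpa using this.const_mul (Real.exp S)
    have he_tend : Tendsto e atTop (nhds 1) := by
      have h1 : Tendsto (fun N => S - s N) atTop (nhds 0) := by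
        have := tendsto_const_nhds (x := S) (f := atTop (α := ℕ)) |>.sub hstend
        simpa using this
      have := (Real.continuous_exp.tendsto 0).comp h1
      simpa [Function.comp_def] using this
    have hb_tend : Tendsto b atTop (nhds 0) := by
      have h1 : Tendsto (fun N => Real.sqrt (MA * c N)) atTop (nhds 0) := by
        have := (Real.continuous_sqrt.tendsto 0).comp
          (by simpa using hc_tend.const_mul MA :
            Tendsto (fun N => MA * c N) atTop (nhds 0))
        simpa [Function.comp_def] using this
      have h2 : Tendsto (fun N => (e N - 1) * (μ * ‖x‖)) atTop (nhds 0) := by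
        have := (he_tend.sub (tendsto_const_nhds : Tendsto (fun _ : ℕ => (1:ℝ)) atTop (nhds 1))).mul_const (μ * ‖x‖)
        simpa using this
      simpa using h1.add h2
    -- the key estimate
    have hkey : ∀ N n m, N ≤ n → N ≤ m → n ≤ m →
        dist (W n x) (W m x) ≤ b N := by
      intro N n m hNn hNm hnm
      set A : H →L[ℝ] H := π n m • W n - W m with hAdef
      have hAapp : ∀ u : H, A u = π n m • W n u - W m u := fun u => rfl
      have hAsym : ∀ u v : H, ⟪A u, v⟫ = ⟪u, A v⟫ := by
        intro u v
        simp only [hAapp, inner_sub_left, inner_sub_right,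
          real_inner_smul_left, real_inner_smul_right, hsymW n, hsymW m]
      have hApos : ∀ u : H, 0 ≤ ⟪A u, u⟫ := by
        intro u
        have := htel u n m hnm
        simp only [hAapp, inner_sub_left, real_inner_smul_left]
        linarith
      have hπS : π n m ≤ Real.exp S := by
        calc π n m ≤ Real.exp (S - s n) := hπexp n m hnm
          _ ≤ Real.exp S := Real.exp_le_exp.mpr (by linarith [hs0 n])
      have hAnorm : ‖A‖ ≤ MA := by
        apply ContinuousLinearMap.opNorm_le_bound _ hMA0
        intro u
        have h2 : ‖W n u‖ ≤ μ * ‖u‖ := le_trans ((W n).le_opNorm u)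
          (mul_le_mul_of_nonneg_right (hWμ n) (norm_nonneg u))
        have h3 : ‖W m u‖ ≤ μ * ‖u‖ := le_trans ((W m).le_opNorm u)
          (mul_le_mul_of_nonneg_right (hWμ m) (norm_nonneg u))
        have h4 : π n m * ‖W n u‖ ≤ Real.exp S * (μ * ‖u‖) :=
          mul_le_mul hπS h2 (norm_nonneg _) (Real.exp_pos S).le
        calc ‖A u‖ = ‖π n m • W n u - W m u‖ := by rw [hAapp]
          _ ≤ ‖π n m • W n u‖ + ‖W m u‖ := norm_sub_le _ _
          _ = π n m * ‖W n u‖ + ‖W m u‖ := by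
              rw [norm_smul, Real.norm_eq_abs, abs_of_nonneg (by linarith [hπ1 n m])]
          _ ≤ Real.exp S * (μ * ‖u‖) + μ * ‖u‖ := add_le_add h4 h3
          _ = MA * ‖u‖ := by rw [hMAdef]; ring
      have hqn : ⟪W n x, x⟫ = r n * P n := (div_mul_cancel₀ _ (hPpos n).ne').symm
      have hqm : ⟪W m x, x⟫ = r m * P m := (div_mul_cancel₀ _ (hPpos m).ne').symm
      have hAxx : ⟪A x, x⟫ ≤ c N := by
        have hAx : ⟪A x, x⟫ = π n m * ⟪W n x, x⟫ - ⟪W m x, x⟫ := by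
          simp only [hAapp, inner_sub_left, real_inner_smul_left]
        have hPmeq : π n m * P n = P m := by rw [mul_comm]; exact hPπ n m hnm
        have hrmn : r m ≤ r n := hr_anti hnm
        have hrnN : r n ≤ r N := hr_anti hNn
        have hRm : R ≤ r m := hRle m
        calc ⟪A x, x⟫ = P m * (r n - r m) := by
              rw [hAx, hqn, hqm, ← hPmeq]; ring
          _ ≤ Real.exp S * (r N - R) :=
              mul_le_mul (hPle m) (by linarith) (by linarith) (Real.exp_pos S).le
          _ = c N := rfl
      have hAx2 : ‖A x‖ ^ 2 ≤ MA * c N := by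
        calc ‖A x‖ ^ 2 ≤ ‖A‖ * ⟪A x, x⟫ := aux_cs A hAsym hApos x
          _ ≤ MA * c N := mul_le_mul hAnorm hAxx (hApos x) hMA0
      have hc0 : 0 ≤ MA * c N := le_trans (sq_nonneg _) hAx2
      have hAxle : ‖A x‖ ≤ Real.sqrt (MA * c N) :=
        (Real.le_sqrt (norm_nonneg _) hc0).mpr hAx2
      -- decompose
      have hdecomp : W n x - W m x = A x - (π n m - 1) • W n x := by
        rw [hAapp]; module
      have hterm2 : ‖(π n m - 1) • W n x‖ ≤ (e N - 1) * (μ * ‖x‖) := by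
        rw [norm_smul, Real.norm_eq_abs, abs_of_nonneg (by linarith [hπ1 n m])]
        have hπeN : π n m ≤ e N := by
          calc π n m ≤ Real.exp (S - s n) := hπexp n m hnm
            _ ≤ e N := Real.exp_le_exp.mpr (by linarith [hsmono hNn])
        have hWnx : ‖W n x‖ ≤ μ * ‖x‖ := by
          calc ‖W n x‖ ≤ ‖W n‖ * ‖x‖ := (W n).le_opNorm x
            _ ≤ μ * ‖x‖ := mul_le_mul_of_nonneg_right (hWμ n) (norm_nonneg x)
        have h1 : (1:ℝ) ≤ e N := by
          calc (1:ℝ) ≤ π n m := hπ1 n m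
            _ ≤ e N := hπeN
        exact mul_le_mul (by linarith) hWnx (norm_nonneg _) (by linarith)
      calc dist (W n x) (W m x) = ‖W n x - W m x‖ := dist_eq_norm _ _
        _ ≤ ‖A x‖ + ‖(π n m - 1) • W n x‖ := by rw [hdecomp]; exact norm_sub_le _ _
        _ ≤ Real.sqrt (MA * c N) + (e N - 1) * (μ * ‖x‖) := add_le_add hAxle hterm2
        _ = b N := rfl
    apply cauchySeq_of_le_tendsto_0 b _ hb_tend
    intro n m N hNn hNm
    rcases le_total n m with h | h
    · exact hkey N n m hNn hNm h
    · rw [dist_comm]; exact hkey N m n hNm hNn h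
  -- construct the limit
  have hex : ∀ x : H, ∃ y, Tendsto (fun n => W n x) atTop (nhds y) := fun x =>
    cauchySeq_tendsto_of_complete (hcauchy x)
  choose g hg using hex
  have hadd : ∀ x y : H, g (x + y) = g x + g y := by
    intro x y
    refine tendsto_nhds_unique (hg (x + y)) ?_
    simpa only [map_add] using (hg x).add (hg y)
  have hsmul : ∀ (c : ℝ) (x : H), g (c • x) = c • g x := by
    intro c x
    refine tendsto_nhds_unique (hg (c • x)) ?_
    simpa only [map_smul] using (hg x).const_smul c
  have hbound : ∀ x : H, ‖g x‖ ≤ μ * ‖x‖ := by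
    intro x
    refine le_of_tendsto (hg x).norm (Filter.Eventually.of_forall fun n => ?_)
    calc ‖W n x‖ ≤ ‖W n‖ * ‖x‖ := (W n).le_opNorm x
      _ ≤ μ * ‖x‖ := mul_le_mul_of_nonneg_right (hWμ n) (norm_nonneg x)
  set Wlim : H →L[ℝ] H := LinearMap.mkContinuous
    { toFun := g
      map_add' := hadd
      map_smul' := hsmul } μ hbound with hWlimdef
  have hWlimapp : ∀ x : H, Wlim x = g x := fun x => rfl
  refine ⟨Wlim, ?_, ?_, ?_⟩
  · rw [ContinuousLinearMap.isSelfAdjoint_iff_isSymmetric]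
    intro u v
    have h1 : Tendsto (fun n => ⟪W n u, v⟫) atTop (nhds ⟪g u, v⟫) :=
      (hg u).inner tendsto_const_nhds
    have h2 : Tendsto (fun n => ⟪(u : H), W n v⟫) atTop (nhds ⟪u, g v⟫) :=
      tendsto_const_nhds.inner (hg v)
    have heq : (fun n => ⟪W n u, v⟫) = fun n => ⟪(u : H), W n v⟫ :=
      funext fun n => hsymW n u v
    rw [heq] at h1
    show ⟪Wlim u, v⟫ = ⟪u, Wlim v⟫
    rw [hWlimapp, hWlimapp]
    exact tendsto_nhds_unique h1 h2
  · intro x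
    rw [hWlimapp]
    have h1 : Tendsto (fun n => ⟪W n x, x⟫) atTop (nhds ⟪g x, x⟫) :=
      (hg x).inner tendsto_const_nhds
    exact ge_of_tendsto' h1 (fun n => hWα n x) |>.trans_eq' rfl
  · intro x
    rw [hWlimapp]
    exact hg x
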